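/- Let V be a finite-dimensional vector space of dimension d over a field of characteristic 0, and let λ be a partition of n with more than d parts. Then the Schur functor value S_λ(V) = Hom_{S_n}(U_λ, V^{⊗n}) is zero. -/

import Mathlib

open TensorProduct PiTensorProduct

private lemma aux_alt {K V : Type} [Field K] [AddCommGroup V] [Module K V]
    [FiniteDimensional K V] {d n : ℕ} (hd : Module.finrank K V = d)
    (S : Finset (Fin n)) (hS : d < S.card) (u : Fin n → V) :
    ∑ σ : Equiv.Perm {i // i ∈ S},
      ((Equiv.Perm.sign σ : ℤ) : K) •
        (tprod K (u ∘ ⇑(Equiv.Perm.ofSubtype σ)⁻¹) : ⨂[K] (_ : Fin n), V) = 0 := by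
  classical
  set m := (tprod K : MultilinearMap K (fun _ : Fin n => V) _).domDomRestrict
    (fun i => i ∈ S) (fun j => u j.1) with hm
  have hdep : ¬ LinearIndependent K (fun i : {i // i ∈ S} => u i) := by
    intro h
    have h2 := h.fintype_card_le_finrank
    rw [hd, Fintype.card_coe] at h2
    omega
  have h0 := (MultilinearMap.alternatization m).map_linearDependent
    (fun i : {i // i ∈ S} => u i) hdep
  rw [MultilinearMap.alternatization_apply] at h0
  rw [← h0]
  refine Finset.sum_equiv (Equiv.inv (Equiv.Perm {i // i ∈ S})) (by simp) ?_
  intro σ _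
  have hfun : (fun j : Fin n => if h : j ∈ S then
      u ((σ⁻¹ : Equiv.Perm {i // i ∈ S}) ⟨j, h⟩ : Fin n) else u j)
      = u ∘ ⇑(Equiv.Perm.ofSubtype σ)⁻¹ := by
    funext j
    rw [← map_inv]
    by_cases h : j ∈ S
    · simp only [h, dif_pos, Function.comp_apply,
        Equiv.Perm.ofSubtype_apply_of_mem _ h]
    · simp only [h, dif_neg, not_false_iff, Function.comp_apply,
        Equiv.Perm.ofSubtype_apply_of_not_mem _ h]
  show _ = Equiv.Perm.sign (Equiv.inv _ σ) • m.domDomCongr (Equiv.inv _ σ) (fun i => u i)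
  rw [MultilinearMap.domDomCongr_apply]
  simp only [Equiv.inv_apply]
  rw [hm, MultilinearMap.domDomRestrict_apply]
  simp only []
  rw [hfun, Equiv.Perm.sign_inv, Units.smul_def, Int.cast_smul_eq_zsmul]


private lemma aux_bsum_zero {K V : Type} [Field K] [CharZero K] [AddCommGroup V] [Module K V]
    [FiniteDimensional K V] {d n : ℕ} (hd : Module.finrank K V = d)
    (μ : YoungDiagram) (hparts : d < μ.colLen 0)
    (T : {c // c ∈ μ.cells} ≃ Fin n)
    (v : Fin n → V) :
    ∑ q ∈ Finset.univ.filter (fun q : Equiv.Perm (Fin n) =>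
        ∀ x : {c // c ∈ μ.cells}, (↑(T.symm (q (T x))) : ℕ × ℕ).2 = (↑x : ℕ × ℕ).2),
      ((Equiv.Perm.sign q : ℤ) : K) • (tprod K (v ∘ ⇑q⁻¹) : ⨂[K] (_ : Fin n), V) = 0 := by
  classical
  set Cset : Finset (Equiv.Perm (Fin n)) := Finset.univ.filter (fun q : Equiv.Perm (Fin n) =>
      ∀ x : {c // c ∈ μ.cells}, (↑(T.symm (q (T x))) : ℕ × ℕ).2 = (↑x : ℕ × ℕ).2) with hCset
  set S : Finset (Fin n) :=
    Finset.univ.filter (fun i : Fin n => (↑(T.symm i) : ℕ × ℕ).2 = 0) with hSset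
  have hmemS : ∀ i : Fin n, i ∈ S ↔ (↑(T.symm i) : ℕ × ℕ).2 = 0 := by
    intro i; simp [hSset]
  have hmemC : ∀ q : Equiv.Perm (Fin n), q ∈ Cset ↔
      ∀ x : {c // c ∈ μ.cells}, (↑(T.symm (q (T x))) : ℕ × ℕ).2 = (↑x : ℕ × ℕ).2 := by
    intro q; simp [hCset]
  -- cardinality bound
  have hcell : ∀ i : Fin (μ.colLen 0), ((i : ℕ), 0) ∈ μ.cells := fun i => by
    rw [YoungDiagram.mem_cells, YoungDiagram.mem_iff_lt_colLen]; exact i.2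
  have hcard : μ.colLen 0 ≤ S.card := by
    rw [← Fintype.card_coe, ← Fintype.card_fin (μ.colLen 0)]
    apply Fintype.card_le_of_injective
      (fun i : Fin (μ.colLen 0) => (⟨T ⟨((i : ℕ), 0), hcell i⟩, by rw [hmemS]; simp⟩ : {i // i ∈ S}))
    intro i j hij
    simp only [Subtype.mk.injEq, EmbeddingLike.apply_eq_iff_eq] at hij
    exact Fin.ext (congrArg Prod.fst hij)
  have hScard : d < S.card := lt_of_lt_of_le hparts hcard
  -- closure properties
  have hCmul : ∀ s q : Equiv.Perm (Fin n), s ∈ Cset → q ∈ Cset → s * q ∈ Cset := by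
    intro s q hs hq
    rw [hmemC] at hs hq ⊢
    intro x
    have h1 := hq x
    have h2 := hs (T.symm (q (T x)))
    rw [Equiv.apply_symm_apply] at h2
    simpa [Equiv.Perm.mul_apply] using h2.trans h1
  have hCinv : ∀ q : Equiv.Perm (Fin n), q ∈ Cset → q⁻¹ ∈ Cset := by
    intro q hq
    rw [hmemC] at hq ⊢
    intro x
    have h2 := hq (T.symm (q⁻¹ (T x)))
    rw [Equiv.apply_symm_apply, ← Equiv.Perm.mul_apply, mul_inv_cancel, Equiv.Perm.one_apply] at h2
    simpa using h2.symm
  have hsub : ∀ σ : Equiv.Perm {i // i ∈ S}, Equiv.Perm.ofSubtype σ ∈ Cset := by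
    intro σ
    rw [hmemC]
    intro x
    by_cases h : T x ∈ S
    · rw [Equiv.Perm.ofSubtype_apply_of_mem _ h]
      have hmem : ((σ ⟨T x, h⟩ : Fin n)) ∈ S := (σ ⟨T x, h⟩).2
      rw [hmemS] at hmem h
      rw [Equiv.symm_apply_apply] at h
      rw [hmem, h]
    · rw [Equiv.Perm.ofSubtype_apply_of_not_mem _ h]
      simp
  -- the function being summed
  set F : Equiv.Perm (Fin n) → (⨂[K] (_ : Fin n), V) :=
    fun q => ((Equiv.Perm.sign q : ℤ) : K) • tprod K (v ∘ ⇑q⁻¹) with hF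
  -- key vanishing for each coset
  have hkey : ∀ q : Equiv.Perm (Fin n),
      (∑ σ : Equiv.Perm {i // i ∈ S}, F (Equiv.Perm.ofSubtype σ * q)) = 0 := by
    intro q
    have := aux_alt hd S hScard (v ∘ ⇑q⁻¹)
    calc (∑ σ : Equiv.Perm {i // i ∈ S}, F (Equiv.Perm.ofSubtype σ * q))
        = ∑ σ : Equiv.Perm {i // i ∈ S}, ((Equiv.Perm.sign q : ℤ) : K) •
            (((Equiv.Perm.sign σ : ℤ) : K) •
              tprod K ((v ∘ ⇑q⁻¹) ∘ ⇑(Equiv.Perm.ofSubtype σ)⁻¹)) := by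
          apply Finset.sum_congr rfl
          intro σ _
          simp only [hF]
          have h1 : (v ∘ ⇑(Equiv.Perm.ofSubtype σ * q)⁻¹)
              = (v ∘ ⇑q⁻¹) ∘ ⇑(Equiv.Perm.ofSubtype σ)⁻¹ := by
            funext i; simp [Equiv.Perm.mul_apply, mul_inv_rev]
          rw [h1, _root_.map_mul, Equiv.Perm.sign_ofSubtype]
          rw [smul_smul]
          congr 1
          rw [Units.val_mul, Int.cast_mul, mul_comm]
      _ = ((Equiv.Perm.sign q : ℤ) : K) • ∑ σ : Equiv.Perm {i // i ∈ S},
            (((Equiv.Perm.sign σ : ℤ) : K) •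
              tprod K ((v ∘ ⇑q⁻¹) ∘ ⇑(Equiv.Perm.ofSubtype σ)⁻¹)) := by
          rw [Finset.smul_sum]
      _ = 0 := by rw [this, smul_zero]
  -- averaging
  have hmain : (Fintype.card (Equiv.Perm {i // i ∈ S})) • (∑ q ∈ Cset, F q) = 0 := by
    rw [← Finset.card_univ, ← Finset.sum_const]
    calc ∑ _σ : Equiv.Perm {i // i ∈ S}, (∑ q ∈ Cset, F q)
        = ∑ σ : Equiv.Perm {i // i ∈ S}, (∑ q ∈ Cset, F (Equiv.Perm.ofSubtype σ * q)) := by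
          apply Finset.sum_congr rfl
          intro σ _
          refine (Finset.sum_nbij' (i := fun q => Equiv.Perm.ofSubtype σ * q)
            (j := fun q => (Equiv.Perm.ofSubtype σ)⁻¹ * q) ?_ ?_ ?_ ?_ ?_).symm
          · intro q hq; exact hCmul _ _ (hsub σ) hq
          · intro q hq; exact hCmul _ _ (hCinv _ (hsub σ)) hq
          · intro q _; simp
          · intro q _; simp
          · intro q _; rfl
      _ = ∑ q ∈ Cset, (∑ σ : Equiv.Perm {i // i ∈ S}, F (Equiv.Perm.ofSubtype σ * q)) :=
          Finset.sum_comm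
      _ = 0 := by simp [hkey]
  have hcard0 : (Fintype.card (Equiv.Perm {i // i ∈ S}) : K) ≠ 0 := by
    exact_mod_cast Nat.cast_ne_zero.mpr Fintype.card_ne_zero
  rw [← Nat.cast_smul_eq_nsmul K] at hmain
  rcases smul_eq_zero.mp hmain with h | h
  · exact absurd h hcard0
  · exact h

/-- Let `V` be a `d`-dimensional vector space over a field of characteristic 0
and let `λ` be a partition of `n` (presented as a Young diagram `μ` with `n` cells) with more
than `d` parts (i.e. its first column has length `> d`).  Then the Schur functor value
`S_λ(V) = Hom_{S_n}(U_λ, V^{⊗n})` is zero: every `S_n`-equivariant linear map from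
`U_λ` to `V^{⊗n}` vanishes.  Here, following Theorem 4.36 of Etingof et al., `U_λ` is realized
as the left ideal `ℚ[S_n]·c_λ` of the group algebra generated by the Young symmetrizer
`c_λ = a_λ · b_λ` of a Young tableau `T` on `μ` (`a_λ` the sum of the row stabilizer, `b_λ`
the signed sum of the column stabilizer), `S_n` acts on `U_λ` by left multiplication, and
`S_n` acts on `V^{⊗n}` by permuting the tensor factors (`ρ`). -/
theorem schur_functor_zero_of_many_parts {K V : Type} [Field K] [CharZero K]
    [AddCommGroup V] [Module K V] [FiniteDimensional K V]
    {d n : ℕ} (hd : Module.finrank K V = d)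
    (μ : YoungDiagram) (hn : μ.card = n) (hparts : d < μ.colLen 0)
    (T : {c // c ∈ μ.cells} ≃ Fin n)
    (ρ : Equiv.Perm (Fin n) → Module.End K (⨂[K] (_ : Fin n), V))
    (hρ : ∀ (σ : Equiv.Perm (Fin n)) (v : Fin n → V),
      ρ σ (tprod K v) = tprod K (v ∘ ⇑σ⁻¹))
    (c : MonoidAlgebra K (Equiv.Perm (Fin n)))
    (hc : c =
      (∑ p ∈ Finset.univ.filter (fun p : Equiv.Perm (Fin n) =>
          ∀ x : {c // c ∈ μ.cells}, (↑(T.symm (p (T x))) : ℕ × ℕ).1 = (↑x : ℕ × ℕ).1),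
        MonoidAlgebra.single p (1 : K)) *
      (∑ q ∈ Finset.univ.filter (fun q : Equiv.Perm (Fin n) =>
          ∀ x : {c // c ∈ μ.cells}, (↑(T.symm (q (T x))) : ℕ × ℕ).2 = (↑x : ℕ × ℕ).2),
        MonoidAlgebra.single q ((Equiv.Perm.sign q : ℤ) : K)))
    (U : Submodule K (MonoidAlgebra K (Equiv.Perm (Fin n))))
    (hU : U = LinearMap.range (LinearMap.mulRight K c))
    (f : U →ₗ[K] ⨂[K] (_ : Fin n), V)
    (hf : ∀ (σ : Equiv.Perm (Fin n)) (x : MonoidAlgebra K (Equiv.Perm (Fin n)))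
      (hx : x ∈ U) (hx' : MonoidAlgebra.single σ (1 : K) * x ∈ U),
      f ⟨MonoidAlgebra.single σ (1 : K) * x, hx'⟩ = ρ σ (f ⟨x, hx⟩)) :
    f = 0 := by
  classical
  -- ρ is multiplicative
  have hρmul : ∀ σ τ : Equiv.Perm (Fin n), ρ (σ * τ) = ρ σ * ρ τ := by
    intro σ τ
    apply PiTensorProduct.ext
    apply MultilinearMap.ext
    intro v
    simp only [LinearMap.compMultilinearMap_apply, Module.End.mul_apply, hρ]
    congr 1
  have hρone : ρ 1 = 1 := by
    apply PiTensorProduct.ext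
    apply MultilinearMap.ext
    intro v
    simp only [LinearMap.compMultilinearMap_apply, hρ, Module.End.one_apply]
    simp
  let ρM : Equiv.Perm (Fin n) →* Module.End K (⨂[K] (_ : Fin n), V) :=
    { toFun := ρ, map_one' := hρone, map_mul' := hρmul }
  let Ρ := (MonoidAlgebra.lift K (Module.End K (⨂[K] (_ : Fin n), V))
    (Equiv.Perm (Fin n))) ρM
  set bb := (∑ q ∈ Finset.univ.filter (fun q : Equiv.Perm (Fin n) =>
      ∀ x : {c // c ∈ μ.cells}, (↑(T.symm (q (T x))) : ℕ × ℕ).2 = (↑x : ℕ × ℕ).2),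
    MonoidAlgebra.single q ((Equiv.Perm.sign q : ℤ) : K)) with hbb
  -- Ρ of the column symmetrizer vanishes
  have hΡb : Ρ bb = 0 := by
    have h1 : Ρ bb = ∑ q ∈ Finset.univ.filter (fun q : Equiv.Perm (Fin n) =>
        ∀ x : {c // c ∈ μ.cells}, (↑(T.symm (q (T x))) : ℕ × ℕ).2 = (↑x : ℕ × ℕ).2),
        ((Equiv.Perm.sign q : ℤ) : K) • ρ q := by
      rw [hbb, map_sum]
      apply Finset.sum_congr rfl
      intro q _
      rw [MonoidAlgebra.lift_single]
      rfl
    rw [h1]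
    apply PiTensorProduct.ext
    apply MultilinearMap.ext
    intro v
    simp only [LinearMap.compMultilinearMap_apply, LinearMap.coe_sum, Finset.sum_apply,
      LinearMap.smul_apply, LinearMap.zero_apply, hρ]
    exact aux_bsum_zero hd μ hparts T v
  -- Maschke
  haveI : NeZero ((Fintype.card (Equiv.Perm (Fin n)) : K)) :=
    ⟨Nat.cast_ne_zero.mpr Fintype.card_ne_zero⟩
  let U' : Submodule (MonoidAlgebra K (Equiv.Perm (Fin n)))
      (MonoidAlgebra K (Equiv.Perm (Fin n))) :=
    Submodule.span (MonoidAlgebra K (Equiv.Perm (Fin n))) {c}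
  have hUU' : ∀ x, x ∈ U ↔ x ∈ U' := by
    intro x
    rw [hU]
    constructor
    · rintro ⟨y, rfl⟩
      exact Submodule.mem_span_singleton.mpr ⟨y, rfl⟩
    · intro hx
      obtain ⟨y, hy⟩ := Submodule.mem_span_singleton.mp hx
      exact ⟨y, hy⟩
  obtain ⟨Q, hQ⟩ := MonoidAlgebra.Submodule.exists_isCompl U'
  let π : MonoidAlgebra K (Equiv.Perm (Fin n)) →ₗ[MonoidAlgebra K (Equiv.Perm (Fin n))]
      MonoidAlgebra K (Equiv.Perm (Fin n)) :=
    U'.subtype ∘ₗ (U'.linearProjOfIsCompl Q hQ)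
  set ε := π 1 with hε
  have hεU' : ε ∈ U' := (U'.linearProjOfIsCompl Q hQ 1).2
  have hπid : ∀ u : MonoidAlgebra K (Equiv.Perm (Fin n)), u ∈ U' → π u = u := by
    intro u hu
    show U'.subtype (U'.projectionOnto Q hQ u) = u
    have : u = ((⟨u, hu⟩ : U') : MonoidAlgebra K (Equiv.Perm (Fin n))) := rfl
    rw [this, Submodule.linearProjOfIsCompl_apply_left hQ ⟨u, hu⟩]
    rfl
  have hπx : ∀ x : MonoidAlgebra K (Equiv.Perm (Fin n)), π x = x * ε := by
    intro x
    have h := π.map_smul x (1 : MonoidAlgebra K (Equiv.Perm (Fin n)))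
    simpa [smul_eq_mul] using h
  have hidem : ε * ε = ε := by rw [← hπx ε, hπid ε hεU']
  -- Ρ ε = 0
  obtain ⟨y, hy⟩ := Submodule.mem_span_singleton.mp hεU'
  have hΡε : Ρ ε = 0 := by
    rw [← hy, smul_eq_mul, _root_.map_mul, hc, _root_.map_mul, hΡb, mul_zero, mul_zero]
  -- memberships
  have hεU : ε ∈ U := (hUU' ε).2 hεU'
  have hmemAll : ∀ x : MonoidAlgebra K (Equiv.Perm (Fin n)), x * ε ∈ U := by
    intro x
    refine (hUU' _).2 ?_
    rw [← smul_eq_mul]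
    exact U'.smul_mem x hεU'
  set w := f ⟨ε, hεU⟩ with hw
  let L : MonoidAlgebra K (Equiv.Perm (Fin n)) →ₗ[K] (⨂[K] (_ : Fin n), V) :=
    f ∘ₗ ((LinearMap.mulRight K ε).codRestrict U (fun x => hmemAll x))
  let M : MonoidAlgebra K (Equiv.Perm (Fin n)) →ₗ[K] (⨂[K] (_ : Fin n), V) :=
    { toFun := fun x => Ρ x w
      map_add' := fun a b => by simp [map_add, LinearMap.add_apply]
      map_smul' := fun r a => by simp [map_smul, LinearMap.smul_apply] }
  have hLval : ∀ x : MonoidAlgebra K (Equiv.Perm (Fin n)), L x = f ⟨x * ε, hmemAll x⟩ := by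
    intro x; rfl
  have hLM : L = M := by
    apply MonoidAlgebra.lhom_ext'
    intro σ
    apply LinearMap.ext
    intro k
    show L (MonoidAlgebra.single σ k) = Ρ (MonoidAlgebra.single σ k) w
    have h1 : MonoidAlgebra.single σ k = k • MonoidAlgebra.single σ (1 : K) := by
      rw [MonoidAlgebra.smul_single', mul_one]
    have h2 : (⟨MonoidAlgebra.single σ k * ε, hmemAll _⟩ : U)
        = k • ⟨MonoidAlgebra.single σ (1 : K) * ε, hmemAll _⟩ := by
      apply Subtype.ext
      show MonoidAlgebra.single σ k * ε = k • (MonoidAlgebra.single σ (1 : K) * ε)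
      rw [h1, smul_mul_assoc]
    rw [hLval, h2, map_smul, hf σ ε hεU (hmemAll _), MonoidAlgebra.lift_single]
    rfl
  have hw0 : w = 0 := by
    have h2 : (⟨ε, hεU⟩ : U) = ⟨ε * ε, hmemAll ε⟩ := Subtype.ext hidem.symm
    have h3 : w = L ε := by rw [hw, h2, hLval]
    rw [h3, hLM]
    show Ρ ε w = 0
    rw [hΡε]
    rfl
  apply LinearMap.ext
  rintro ⟨u, hu⟩
  have huU' := (hUU' u).1 hu
  have hu2 : u = u * ε := by rw [← hπx u, hπid u huU']
  have h3 : (⟨u, hu⟩ : U) = ⟨u * ε, hmemAll u⟩ := Subtype.ext hu2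
  rw [h3, ← hLval, hLM]
  show Ρ u w = 0
  rw [hw0, map_zero]
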